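/- For a Euclidean triangle with inradius r and circumradius R, the condition r/R ≥ f (for some f > 0) holds if and only if the minimal angle of the triangle is bounded below by some angle φ = φ(f) > 0 depending only on f. Concretely: for every f > 0 there exists φ > 0 such that every triangle with r/R ≥ f has all angles ≥ φ, and conversely for every φ > 0 there exists f > 0 such that every triangle with all angles ≥ φ satisfies r/R ≥ f. -/

import Mathlib

open EuclideanGeometry Metric Real

noncomputable section

abbrev E2 := EuclideanSpace ℝ (Fin 2)

/-- The inradius of a set: radius of the largest closed ball (relative to the affine span
of the set) contained in the set. -/
def inradius (s : Set E2) : ℝ :=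
  sSup {r : ℝ | 0 ≤ r ∧ ∃ c ∈ affineSpan ℝ s, closedBall c r ∩ (affineSpan ℝ s : Set E2) ⊆ s}

/-- The circumradius of a set: radius of the smallest closed ball containing it. -/
def circumradius (s : Set E2) : ℝ :=
  sInf {r : ℝ | 0 ≤ r ∧ ∃ c, s ⊆ closedBall c r}

/-- A triangle `ABC` is `f`-fat if the ratio inradius/circumradius is at least `f`. -/
def FatTri (f : ℝ) (A B C : E2) : Prop :=
  f ≤ inradius (convexHull ℝ {A, B, C}) / circumradius (convexHull ℝ {A, B, C})

namespace FatAux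

/-! ### 2D cross product -/

def d2 (v w : E2) : ℝ := v 0 * w 1 - v 1 * w 0

lemma norm_sq_eq (v : E2) : ‖v‖ ^ 2 = v 0 ^ 2 + v 1 ^ 2 := by
  rw [EuclideanSpace.norm_eq, Real.sq_sqrt (by positivity)]
  simp [Fin.sum_univ_two, sq_abs]

lemma inner_eq (v w : E2) : (inner ℝ v w : ℝ) = v 0 * w 0 + v 1 * w 1 := by
  simp [PiLp.inner_apply, Fin.sum_univ_two, RCLike.inner_apply, mul_comm]

lemma lagrange (v w : E2) : (‖v‖ * ‖w‖) ^ 2 - (inner ℝ v w : ℝ) ^ 2 = d2 v w ^ 2 := by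
  have h1 := norm_sq_eq v
  have h2 := norm_sq_eq w
  have h3 := inner_eq v w
  rw [mul_pow, h1, h2, h3, d2]; ring

lemma abs_d2_le (v w : E2) : |d2 v w| ≤ ‖v‖ * ‖w‖ := by
  have h := lagrange v w
  have hn : 0 ≤ ‖v‖ * ‖w‖ := by positivity
  nlinarith [abs_nonneg (d2 v w), sq_abs (d2 v w), sq_nonneg (inner ℝ v w : ℝ)]

lemma sin_angle_eq {v w : E2} (hv : v ≠ 0) (hw : w ≠ 0) :
    Real.sin (InnerProductGeometry.angle v w) = |d2 v w| / (‖v‖ * ‖w‖) := by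
  rw [InnerProductGeometry.angle, Real.sin_arccos]
  have hv' : ‖v‖ > 0 := norm_pos_iff.mpr hv
  have hw' : ‖w‖ > 0 := norm_pos_iff.mpr hw
  have key : 1 - ((inner ℝ v w : ℝ) / (‖v‖ * ‖w‖)) ^ 2 = (|d2 v w| / (‖v‖ * ‖w‖)) ^ 2 := by
    rw [div_pow, div_pow, sq_abs]
    field_simp
    have L := lagrange v w
    rw [inner_eq] at L
    rw [inner_eq]; linear_combination L
  rw [key, Real.sqrt_sq (by positivity)]

/-! ### rotation by 90 degrees -/

def rot (w : E2) : E2 := WithLp.toLp 2 ![-(w 1), w 0]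

lemma norm_rot (w : E2) : ‖rot w‖ = ‖w‖ := by
  have h : ‖rot w‖ ^ 2 = ‖w‖ ^ 2 := by
    rw [norm_sq_eq, norm_sq_eq]
    show (-(w 1)) ^ 2 + (w 0) ^ 2 = _
    ring
  nlinarith [norm_nonneg (rot w), norm_nonneg w]

lemma d2_rot (w : E2) : d2 (rot w) w = -(‖w‖ ^ 2) := by
  rw [norm_sq_eq]
  show (-(w 1)) * w 1 - w 0 * w 0 = _
  ring

lemma d2_smul_left (t : ℝ) (v w : E2) : d2 (t • v) w = t * d2 v w := by
  show (t * v 0) * w 1 - (t * v 1) * w 0 = _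
  unfold d2; ring

lemma cramer_vec' (v w1 w2 : E2) :
    d2 w1 w2 • v = d2 v w2 • w1 + d2 w1 v • w2 := by
  ext i
  fin_cases i
  · show d2 w1 w2 * v 0 = d2 v w2 * w1 0 + d2 w1 v * w2 0
    unfold d2; ring
  · show d2 w1 w2 * v 1 = d2 v w2 * w1 1 + d2 w1 v * w2 1
    unfold d2; ring

/-! ### barycentric coordinates -/

variable {A B C : E2}

section Defs
variable (A B C)

def cB' (x : E2) : ℝ := d2 (x - A) (C - A) / d2 (B - A) (C - A)
def cC' (x : E2) : ℝ := d2 (B - A) (x - A) / d2 (B - A) (C - A)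
def cA' (x : E2) : ℝ := 1 - cB' A B C x - cC' A B C x

end Defs

lemma csum (x : E2) : cA' A B C x + cB' A B C x + cC' A B C x = 1 := by
  unfold cA'; ring

variable (hD : d2 (B - A) (C - A) ≠ 0)

lemma cB_diff (x y : E2) :
    cB' A B C x - cB' A B C y = d2 (x - y) (C - A) / d2 (B - A) (C - A) := by
  unfold cB'
  rw [div_sub_div_same]
  congr 1
  show ((x 0 - A 0) * (C 1 - A 1) - (x 1 - A 1) * (C 0 - A 0))
      - ((y 0 - A 0) * (C 1 - A 1) - (y 1 - A 1) * (C 0 - A 0))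
      = (x 0 - y 0) * (C 1 - A 1) - (x 1 - y 1) * (C 0 - A 0)
  ring

lemma cC_diff (x y : E2) :
    cC' A B C x - cC' A B C y = d2 (x - y) (A - B) / d2 (B - A) (C - A) := by
  unfold cC'
  rw [div_sub_div_same]
  congr 1
  show ((B 0 - A 0) * (x 1 - A 1) - (B 1 - A 1) * (x 0 - A 0))
      - ((B 0 - A 0) * (y 1 - A 1) - (B 1 - A 1) * (y 0 - A 0))
      = (x 0 - y 0) * (A 1 - B 1) - (x 1 - y 1) * (A 0 - B 0)
  ring

lemma cA_diff (x y : E2) :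
    cA' A B C x - cA' A B C y = d2 (x - y) (B - C) / d2 (B - A) (C - A) := by
  unfold cA'
  have h1 := cB_diff (A := A) (B := B) (C := C) x y
  have h2 := cC_diff (A := A) (B := B) (C := C) x y
  have key : -(d2 (x - y) (C - A)) - d2 (x - y) (A - B) = d2 (x - y) (B - C) := by
    show -((x 0 - y 0) * (C 1 - A 1) - (x 1 - y 1) * (C 0 - A 0))
        - ((x 0 - y 0) * (A 1 - B 1) - (x 1 - y 1) * (A 0 - B 0))
        = (x 0 - y 0) * (B 1 - C 1) - (x 1 - y 1) * (B 0 - C 0)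
    ring
  have : (1 - cB' A B C x - cC' A B C x) - (1 - cB' A B C y - cC' A B C y)
      = -(cB' A B C x - cB' A B C y) - (cC' A B C x - cC' A B C y) := by ring
  rw [this, h1, h2, ← key]
  ring

include hD

lemma cramer (x : E2) :
    x - A = cB' A B C x • (B - A) + cC' A B C x • (C - A) := by
  have h := cramer_vec' (v := x - A) (w1 := B - A) (w2 := C - A)
  have h2 := congrArg (fun z : E2 => (d2 (B - A) (C - A))⁻¹ • z) h
  simp only [smul_add, smul_smul] at h2
  rw [inv_mul_cancel₀ hD, one_smul] at h2
  unfold cB' cC'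
  rw [div_eq_inv_mul, div_eq_inv_mul]
  exact h2

lemma tri_repr (x : E2) :
    cA' A B C x • A + cB' A B C x • B + cC' A B C x • C = x := by
  have h := cramer hD x
  unfold cA'
  generalize cB' A B C x = p at h ⊢
  generalize cC' A B C x = q at h ⊢
  have hx : x = A + (p • (B - A) + q • (C - A)) := by rw [← h]; abel
  rw [hx, sub_smul, sub_smul, one_smul, smul_sub, smul_sub]
  abel

omit hD in
lemma cB_vertexA : cB' A B C A = 0 := by
  unfold cB'
  have : d2 (A - A) (C - A) = 0 := by
    show (A 0 - A 0) * (C 1 - A 1) - (A 1 - A 1) * (C 0 - A 0) = 0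
    ring
  rw [this, zero_div]

omit hD in
lemma cC_vertexA : cC' A B C A = 0 := by
  unfold cC'
  have : d2 (B - A) (A - A) = 0 := by
    show (B 0 - A 0) * (A 1 - A 1) - (B 1 - A 1) * (A 0 - A 0) = 0
    ring
  rw [this, zero_div]

lemma cB_vertexB : cB' A B C B = 1 := by
  unfold cB'; exact div_self hD

omit hD in
lemma cC_vertexB : cC' A B C B = 0 := by
  unfold cC'
  have : d2 (B - A) (B - A) = 0 := by
    show (B 0 - A 0) * (B 1 - A 1) - (B 1 - A 1) * (B 0 - A 0) = 0
    ring
  rw [this, zero_div]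

omit hD in
lemma cB_vertexC : cB' A B C C = 0 := by
  unfold cB'
  have : d2 (C - A) (C - A) = 0 := by
    show (C 0 - A 0) * (C 1 - A 1) - (C 1 - A 1) * (C 0 - A 0) = 0
    ring
  rw [this, zero_div]

lemma cC_vertexC : cC' A B C C = 1 := by
  unfold cC'
  have : d2 (B - A) (C - A) = d2 (B - A) (C - A) := rfl
  exact div_self hD

omit hD in
lemma cB_combo {a b : ℝ} (hab : a + b = 1) (x y : E2) :
    cB' A B C (a • x + b • y) = a * cB' A B C x + b * cB' A B C y := by
  unfold cB'
  have hb : b = 1 - a := by linarith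
  subst hb
  have key : d2 (a • x + (1 - a) • y - A) (C - A)
      = a * d2 (x - A) (C - A) + (1 - a) * d2 (y - A) (C - A) := by
    show (a * x 0 + (1 - a) * y 0 - A 0) * (C 1 - A 1)
        - (a * x 1 + (1 - a) * y 1 - A 1) * (C 0 - A 0)
        = a * ((x 0 - A 0) * (C 1 - A 1) - (x 1 - A 1) * (C 0 - A 0))
        + (1 - a) * ((y 0 - A 0) * (C 1 - A 1) - (y 1 - A 1) * (C 0 - A 0))
    ring
  rw [key, add_div, mul_div_assoc, mul_div_assoc]

omit hD in
lemma cC_combo {a b : ℝ} (hab : a + b = 1) (x y : E2) :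
    cC' A B C (a • x + b • y) = a * cC' A B C x + b * cC' A B C y := by
  unfold cC'
  have hb : b = 1 - a := by linarith
  subst hb
  have key : d2 (B - A) (a • x + (1 - a) • y - A)
      = a * d2 (B - A) (x - A) + (1 - a) * d2 (B - A) (y - A) := by
    show (B 0 - A 0) * (a * x 1 + (1 - a) * y 1 - A 1)
        - (B 1 - A 1) * (a * x 0 + (1 - a) * y 0 - A 0)
        = a * ((B 0 - A 0) * (x 1 - A 1) - (B 1 - A 1) * (x 0 - A 0))
        + (1 - a) * ((B 0 - A 0) * (y 1 - A 1) - (B 1 - A 1) * (y 0 - A 0))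
    ring
  rw [key, add_div, mul_div_assoc, mul_div_assoc]

omit hD in
lemma cA_combo {a b : ℝ} (hab : a + b = 1) (x y : E2) :
    cA' A B C (a • x + b • y) = a * cA' A B C x + b * cA' A B C y := by
  unfold cA'
  rw [cB_combo hab, cC_combo hab]
  linarith

lemma mem_of_nonneg {x : E2} (h0 : 0 ≤ cA' A B C x) (h1 : 0 ≤ cB' A B C x)
    (h2 : 0 ≤ cC' A B C x) : x ∈ convexHull ℝ ({A, B, C} : Set E2) := by
  have hs : ∑ i : Fin 3, ![cA' A B C x, cB' A B C x, cC' A B C x] i = 1 := by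
    rw [Fin.sum_univ_three]
    simpa using csum (A := A) (B := B) (C := C) x
  have h := Finset.centerMass_mem_convexHull (Finset.univ : Finset (Fin 3))
    (w := ![cA' A B C x, cB' A B C x, cC' A B C x]) (z := ![A, B, C])
    (s := ({A, B, C} : Set E2))
    (fun i _ => by fin_cases i <;> simpa)
    (by rw [hs]; norm_num)
    (fun i _ => by fin_cases i <;> simp)
  have hcm : (Finset.univ : Finset (Fin 3)).centerMass
      ![cA' A B C x, cB' A B C x, cC' A B C x] ![A, B, C] = x := by
    rw [Finset.centerMass, hs, inv_one, one_smul, Fin.sum_univ_three]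
    show cA' A B C x • A + cB' A B C x • B + cC' A B C x • C = x
    exact tri_repr hD x
  rwa [hcm] at h

omit hD in
lemma nonneg_of_mem {x : E2} (hx : x ∈ convexHull ℝ ({A, B, C} : Set E2)) :
    0 ≤ cA' A B C x ∧ 0 ≤ cB' A B C x ∧ 0 ≤ cC' A B C x := by
  have hconv : Convex ℝ {y : E2 | 0 ≤ cA' A B C y ∧ 0 ≤ cB' A B C y ∧ 0 ≤ cC' A B C y} := by
    intro u hu v hv a b ha hb hab
    refine ⟨?_, ?_, ?_⟩
    · rw [cA_combo hab]
      exact add_nonneg (mul_nonneg ha hu.1) (mul_nonneg hb hv.1)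
    · rw [cB_combo hab]
      exact add_nonneg (mul_nonneg ha hu.2.1) (mul_nonneg hb hv.2.1)
    · rw [cC_combo hab]
      exact add_nonneg (mul_nonneg ha hu.2.2) (mul_nonneg hb hv.2.2)
  by_cases hD : d2 (B - A) (C - A) = 0
  · -- degenerate: all coordinates have denominator zero, so they are 0, 0 and cA' = 1
    unfold cA' cB' cC'
    rw [hD]
    simp
  · refine convexHull_min ?_ hconv hx
    intro p hp
    rcases hp with rfl | rfl | rfl
    · refine ⟨?_, ?_, ?_⟩
      · unfold cA'; rw [cB_vertexA, cC_vertexA]; norm_num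
      · rw [cB_vertexA]
      · rw [cC_vertexA]
    · refine ⟨?_, ?_, ?_⟩
      · unfold cA'; rw [cB_vertexB hD, cC_vertexB]; norm_num
      · rw [cB_vertexB hD]; norm_num
      · rw [cC_vertexB]
    · refine ⟨?_, ?_, ?_⟩
      · unfold cA'; rw [cB_vertexC, cC_vertexC hD]; norm_num
      · rw [cB_vertexC]
      · rw [cC_vertexC hD]; norm_num

lemma span_top : affineSpan ℝ ({A, B, C} : Set E2) = ⊤ := by
  refine le_antisymm le_top ?_
  intro x _
  have hA : A ∈ affineSpan ℝ ({A, B, C} : Set E2) := subset_affineSpan _ _ (by simp)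
  have hB : B ∈ affineSpan ℝ ({A, B, C} : Set E2) := subset_affineSpan _ _ (by simp)
  have hC : C ∈ affineSpan ℝ ({A, B, C} : Set E2) := subset_affineSpan _ _ (by simp)
  have hBA : B - A ∈ (affineSpan ℝ ({A, B, C} : Set E2)).direction := by
    simpa using AffineSubspace.vsub_mem_direction hB hA
  have hCA : C - A ∈ (affineSpan ℝ ({A, B, C} : Set E2)).direction := by
    simpa using AffineSubspace.vsub_mem_direction hC hA
  have hdir : x - A ∈ (affineSpan ℝ ({A, B, C} : Set E2)).direction := by
    rw [cramer hD x]
    exact Submodule.add_mem _ (Submodule.smul_mem _ _ hBA) (Submodule.smul_mem _ _ hCA)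
  have := AffineSubspace.vadd_mem_of_mem_direction hdir hA
  simpa [vadd_eq_add, sub_add_cancel] using this

omit hD in
lemma d2_ne_of_ind (h : AffineIndependent ℝ ![A, B, C]) : d2 (B - A) (C - A) ≠ 0 := by
  intro hc
  rw [affineIndependent_iff_not_collinear_set] at h
  apply h
  rw [collinear_iff_of_mem (show A ∈ ({A, B, C} : Set E2) by simp)]
  have hc' : (B 0 - A 0) * (C 1 - A 1) - (B 1 - A 1) * (C 0 - A 0) = 0 := hc
  by_cases h0 : B 0 - A 0 = 0
  · by_cases h1 : B 1 - A 1 = 0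
    · have hBA : B = A := by
        ext i; fin_cases i
        · show B 0 = A 0; linarith
        · show B 1 = A 1; linarith
      refine ⟨C - A, ?_⟩
      intro p hp
      rcases hp with hp | hp | hp
      · exact ⟨0, by rw [hp]; simp⟩
      · exact ⟨0, by rw [hp, hBA]; simp⟩
      · refine ⟨1, ?_⟩
        rw [hp]
        ext i; fin_cases i
        · show C 0 = 1 * (C 0 - A 0) + A 0; ring
        · show C 1 = 1 * (C 1 - A 1) + A 1; ring
    · rw [h0, zero_mul] at hc'
      have hC0 : C 0 - A 0 = 0 := by
        have hm : (B 1 - A 1) * (C 0 - A 0) = 0 := by linarith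
        rcases mul_eq_zero.mp hm with hcase | hcase
        · exact absurd hcase h1
        · exact hcase
      refine ⟨B - A, ?_⟩
      intro p hp
      rcases hp with hp | hp | hp
      · exact ⟨0, by rw [hp]; simp⟩
      · refine ⟨1, ?_⟩
        rw [hp]
        ext i; fin_cases i
        · show B 0 = 1 * (B 0 - A 0) + A 0; ring
        · show B 1 = 1 * (B 1 - A 1) + A 1; ring
      · refine ⟨(C 1 - A 1) / (B 1 - A 1), ?_⟩
        rw [hp]
        ext i; fin_cases i
        · show C 0 = (C 1 - A 1) / (B 1 - A 1) * (B 0 - A 0) + A 0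
          rw [h0]; rw [mul_zero, zero_add]; linarith
        · show C 1 = (C 1 - A 1) / (B 1 - A 1) * (B 1 - A 1) + A 1
          field_simp
          ring
  · refine ⟨B - A, ?_⟩
    intro p hp
    rcases hp with hp | hp | hp
    · exact ⟨0, by rw [hp]; simp⟩
    · refine ⟨1, ?_⟩
      rw [hp]
      ext i; fin_cases i
      · show B 0 = 1 * (B 0 - A 0) + A 0; ring
      · show B 1 = 1 * (B 1 - A 1) + A 1; ring
    · refine ⟨(C 0 - A 0) / (B 0 - A 0), ?_⟩
      rw [hp]
      ext i; fin_cases i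
      · show C 0 = (C 0 - A 0) / (B 0 - A 0) * (B 0 - A 0) + A 0
        field_simp
        ring
      · show C 1 = (C 0 - A 0) / (B 0 - A 0) * (B 1 - A 1) + A 1
        rw [div_mul_eq_mul_div, eq_comm, div_add' _ _ _ h0, div_eq_iff h0]
        nlinarith [hc']

omit hD in
lemma vBA_ne : d2 (B - A) (C - A) ≠ 0 → B - A ≠ 0 := by
  intro hD h0
  apply hD
  have h00 : B 0 - A 0 = 0 := by rw [show B 0 - A 0 = (B - A) 0 from rfl, h0]; rfl
  have h01 : B 1 - A 1 = 0 := by rw [show B 1 - A 1 = (B - A) 1 from rfl, h0]; rfl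
  show (B 0 - A 0) * (C 1 - A 1) - (B 1 - A 1) * (C 0 - A 0) = 0
  rw [h00, h01]; ring

omit hD in
lemma vCA_ne : d2 (B - A) (C - A) ≠ 0 → C - A ≠ 0 := by
  intro hD h0
  apply hD
  have h00 : C 0 - A 0 = 0 := by rw [show C 0 - A 0 = (C - A) 0 from rfl, h0]; rfl
  have h01 : C 1 - A 1 = 0 := by rw [show C 1 - A 1 = (C - A) 1 from rfl, h0]; rfl
  show (B 0 - A 0) * (C 1 - A 1) - (B 1 - A 1) * (C 0 - A 0) = 0
  have e0 : C 0 = A 0 := by linarith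
  have e1 : C 1 = A 1 := by linarith
  rw [e0, e1]; ring

omit hD in
lemma vBC_ne : d2 (B - A) (C - A) ≠ 0 → B - C ≠ 0 := by
  intro hD h0
  apply hD
  have h00 : B 0 - C 0 = 0 := by rw [show B 0 - C 0 = (B - C) 0 from rfl, h0]; rfl
  have h01 : B 1 - C 1 = 0 := by rw [show B 1 - C 1 = (B - C) 1 from rfl, h0]; rfl
  show (B 0 - A 0) * (C 1 - A 1) - (B 1 - A 1) * (C 0 - A 0) = 0
  have e0 : B 0 = C 0 := by linarith
  have e1 : B 1 = C 1 := by linarith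
  rw [e0, e1]; ring

/-! ### the triangle, its inradius and circumradius -/

lemma span_top' : affineSpan ℝ (convexHull ℝ ({A, B, C} : Set E2)) = ⊤ := by
  refine le_antisymm le_top ?_
  rw [← span_top hD]
  exact affineSpan_mono ℝ (subset_convexHull ℝ _)

lemma ball_subset_of_mem {ρ : ℝ} {c : E2}
    (hball : closedBall c ρ ∩ (affineSpan ℝ (convexHull ℝ ({A, B, C} : Set E2)) : Set E2)
      ⊆ convexHull ℝ ({A, B, C} : Set E2)) :
    closedBall c ρ ⊆ convexHull ℝ ({A, B, C} : Set E2) := by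
  intro y hy
  refine hball ⟨hy, ?_⟩
  rw [span_top' hD]
  exact AffineSubspace.mem_top ℝ E2 y

lemma rho_bound {k : E2 → ℝ} {w : E2} (hw : w ≠ 0)
    (hk01 : ∀ y ∈ convexHull ℝ ({A, B, C} : Set E2), 0 ≤ k y ∧ k y ≤ 1)
    (hkdiff : ∀ y z : E2, k y - k z = d2 (y - z) w / d2 (B - A) (C - A))
    {ρ : ℝ} (hρ0 : 0 ≤ ρ) {c : E2}
    (hsub : closedBall c ρ ⊆ convexHull ℝ ({A, B, C} : Set E2)) :
    2 * ρ * ‖w‖ ≤ |d2 (B - A) (C - A)| := by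
  have hw' : 0 < ‖w‖ := norm_pos_iff.mpr hw
  have hDpos : 0 < |d2 (B - A) (C - A)| := abs_pos.mpr hD
  set t := ρ / ‖w‖ with ht
  have ht0 : 0 ≤ t := div_nonneg hρ0 hw'.le
  set p1 := c + t • rot w with hp1
  set p2 := c - t • rot w with hp2
  have hnorm : ‖t • rot w‖ = ρ := by
    rw [norm_smul, norm_rot, Real.norm_eq_abs, abs_of_nonneg ht0, ht,
      div_mul_cancel₀ _ hw'.ne']
  have hm1 : p1 ∈ closedBall c ρ := by
    rw [mem_closedBall, dist_eq_norm, hp1, add_sub_cancel_left, hnorm]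
  have hm2 : p2 ∈ closedBall c ρ := by
    rw [mem_closedBall, dist_eq_norm, hp2, sub_sub_cancel_left, norm_neg, hnorm]
  have h1 := hk01 p1 (hsub hm1)
  have h2 := hk01 p2 (hsub hm2)
  have hdiff := hkdiff p1 p2
  have hsub12 : p1 - p2 = (2 * t) • rot w := by
    rw [hp1, hp2, mul_smul, two_smul]
    abel
  rw [hsub12, d2_smul_left, d2_rot] at hdiff
  have habs : |k p1 - k p2| ≤ 1 := abs_le.mpr ⟨by linarith, by linarith⟩
  rw [hdiff] at habs
  have hnum : |2 * t * -(‖w‖ ^ 2)| = 2 * t * ‖w‖ ^ 2 := by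
    rw [show 2 * t * -(‖w‖ ^ 2) = -(2 * t * ‖w‖ ^ 2) by ring, abs_neg,
      abs_of_nonneg (by positivity)]
  rw [abs_div, hnum] at habs
  have hle : 2 * t * ‖w‖ ^ 2 ≤ |d2 (B - A) (C - A)| := by
    rw [div_le_one hDpos] at habs
    exact habs
  have : 2 * t * ‖w‖ ^ 2 = 2 * ρ * ‖w‖ := by
    rw [ht]; field_simp
  linarith

omit hD in
lemma zero_mem_inS :
    (0 : ℝ) ∈ {r : ℝ | 0 ≤ r ∧ ∃ c ∈ affineSpan ℝ (convexHull ℝ ({A, B, C} : Set E2)),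
      closedBall c r ∩ (affineSpan ℝ (convexHull ℝ ({A, B, C} : Set E2)) : Set E2)
        ⊆ convexHull ℝ ({A, B, C} : Set E2)} := by
  refine ⟨le_refl 0, A, ?_, ?_⟩
  · exact subset_affineSpan _ _ (subset_convexHull ℝ _ (by simp))
  · intro y hy
    have : y ∈ closedBall A 0 := hy.1
    rw [mem_closedBall, dist_le_zero] at this
    rw [this]
    exact subset_convexHull ℝ _ (by simp)

omit hD in
lemma cB01 : ∀ y ∈ convexHull ℝ ({A, B, C} : Set E2),
    0 ≤ cB' A B C y ∧ cB' A B C y ≤ 1 := by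
  intro y hy
  obtain ⟨h0, h1, h2⟩ := nonneg_of_mem (A := A) (B := B) (C := C) hy
  exact ⟨h1, by have := csum (A := A) (B := B) (C := C) y; linarith⟩

omit hD in
lemma cC01 : ∀ y ∈ convexHull ℝ ({A, B, C} : Set E2),
    0 ≤ cC' A B C y ∧ cC' A B C y ≤ 1 := by
  intro y hy
  obtain ⟨h0, h1, h2⟩ := nonneg_of_mem (A := A) (B := B) (C := C) hy
  exact ⟨h2, by have := csum (A := A) (B := B) (C := C) y; linarith⟩

omit hD in
lemma cA01 : ∀ y ∈ convexHull ℝ ({A, B, C} : Set E2),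
    0 ≤ cA' A B C y ∧ cA' A B C y ≤ 1 := by
  intro y hy
  obtain ⟨h0, h1, h2⟩ := nonneg_of_mem (A := A) (B := B) (C := C) hy
  exact ⟨h0, by have := csum (A := A) (B := B) (C := C) y; linarith⟩

lemma inS_bddAbove :
    BddAbove {r : ℝ | 0 ≤ r ∧ ∃ c ∈ affineSpan ℝ (convexHull ℝ ({A, B, C} : Set E2)),
      closedBall c r ∩ (affineSpan ℝ (convexHull ℝ ({A, B, C} : Set E2)) : Set E2)
        ⊆ convexHull ℝ ({A, B, C} : Set E2)} := by
  have hw : C - A ≠ 0 := vCA_ne hD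
  have hw' : 0 < ‖C - A‖ := norm_pos_iff.mpr hw
  refine ⟨|d2 (B - A) (C - A)| / (2 * ‖C - A‖), ?_⟩
  rintro ρ ⟨hρ0, c, hc, hball⟩
  have h := rho_bound hD hw (cB01) (fun y z => cB_diff y z) hρ0
    (ball_subset_of_mem hD hball)
  rw [le_div_iff₀ (by positivity)]
  linarith

lemma inradius_nonneg : 0 ≤ inradius (convexHull ℝ ({A, B, C} : Set E2)) :=
  le_csSup (inS_bddAbove hD) (zero_mem_inS)

lemma inradius_le {k : E2 → ℝ} {w : E2} (hw : w ≠ 0)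
    (hk01 : ∀ y ∈ convexHull ℝ ({A, B, C} : Set E2), 0 ≤ k y ∧ k y ≤ 1)
    (hkdiff : ∀ y z : E2, k y - k z = d2 (y - z) w / d2 (B - A) (C - A)) :
    2 * inradius (convexHull ℝ ({A, B, C} : Set E2)) * ‖w‖ ≤ |d2 (B - A) (C - A)| := by
  have hw' : 0 < ‖w‖ := norm_pos_iff.mpr hw
  have h : inradius (convexHull ℝ ({A, B, C} : Set E2))
      ≤ |d2 (B - A) (C - A)| / (2 * ‖w‖) := by
    refine csSup_le ⟨0, zero_mem_inS⟩ ?_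
    rintro ρ ⟨hρ0, c, hc, hball⟩
    have h := rho_bound hD hw hk01 hkdiff hρ0 (ball_subset_of_mem hD hball)
    rw [le_div_iff₀ (by positivity)]
    linarith
  rw [le_div_iff₀ (by positivity)] at h
  linarith

omit hD in
lemma circ_mem : (dist B A + dist C A)
    ∈ {r : ℝ | 0 ≤ r ∧ ∃ c, convexHull ℝ ({A, B, C} : Set E2) ⊆ closedBall c r} := by
  refine ⟨by positivity, A, ?_⟩
  refine convexHull_min ?_ (convex_closedBall A _)
  intro p hp
  rcases hp with hp | hp | hp <;> rw [hp, mem_closedBall]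
  · simp [dist_nonneg]
    positivity
  · have := dist_nonneg (x := C) (y := A); linarith
  · have := dist_nonneg (x := B) (y := A); linarith

omit hD in
lemma circ_le : circumradius (convexHull ℝ ({A, B, C} : Set E2)) ≤ dist B A + dist C A :=
  csInf_le ⟨0, fun _ hy => hy.1⟩ circ_mem

omit hD in
lemma dist_le_two_circ {X Y : E2} (hX : X ∈ convexHull ℝ ({A, B, C} : Set E2))
    (hY : Y ∈ convexHull ℝ ({A, B, C} : Set E2)) :
    dist X Y ≤ 2 * circumradius (convexHull ℝ ({A, B, C} : Set E2)) := by
  have h : dist X Y / 2 ≤ circumradius (convexHull ℝ ({A, B, C} : Set E2)) := by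
    refine le_csInf ⟨_, circ_mem⟩ ?_
    rintro b ⟨hb0, o, ho⟩
    have h1 := mem_closedBall.mp (ho hX)
    have h2 := mem_closedBall.mp (ho hY)
    have h3 := dist_triangle X o Y
    rw [dist_comm o Y] at h3
    linarith
  linarith

lemma AneB : A ≠ B := by
  intro h
  exact vBA_ne hD (by rw [h, sub_self])

lemma circ_pos : 0 < circumradius (convexHull ℝ ({A, B, C} : Set E2)) := by
  have h := dist_le_two_circ (A := A) (B := B) (C := C)
    (subset_convexHull ℝ _ (by simp : A ∈ ({A, B, C} : Set E2)))
    (subset_convexHull ℝ _ (by simp : B ∈ ({A, B, C} : Set E2)))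
  have h2 : 0 < dist A B := dist_pos.mpr (AneB hD)
  linarith

lemma centroid_cB : cB' A B C ((3:ℝ)⁻¹ • (A + B + C)) = 1 / 3 := by
  unfold cB'
  have key : d2 ((3:ℝ)⁻¹ • (A + B + C) - A) (C - A) = d2 (B - A) (C - A) / 3 := by
    show ((3:ℝ)⁻¹ * (A 0 + B 0 + C 0) - A 0) * (C 1 - A 1)
        - ((3:ℝ)⁻¹ * (A 1 + B 1 + C 1) - A 1) * (C 0 - A 0)
        = ((B 0 - A 0) * (C 1 - A 1) - (B 1 - A 1) * (C 0 - A 0)) / 3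
    ring
  rw [key, div_div, mul_comm, ← div_div, div_self hD]

lemma centroid_cC : cC' A B C ((3:ℝ)⁻¹ • (A + B + C)) = 1 / 3 := by
  unfold cC'
  have key : d2 (B - A) ((3:ℝ)⁻¹ • (A + B + C) - A) = d2 (B - A) (C - A) / 3 := by
    show (B 0 - A 0) * ((3:ℝ)⁻¹ * (A 1 + B 1 + C 1) - A 1)
        - (B 1 - A 1) * ((3:ℝ)⁻¹ * (A 0 + B 0 + C 0) - A 0)
        = ((B 0 - A 0) * (C 1 - A 1) - (B 1 - A 1) * (C 0 - A 0)) / 3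
    ring
  rw [key, div_div, mul_comm, ← div_div, div_self hD]

lemma centroid_cA : cA' A B C ((3:ℝ)⁻¹ • (A + B + C)) = 1 / 3 := by
  unfold cA'
  rw [centroid_cB hD, centroid_cC hD]
  norm_num

lemma inradius_ge :
    |d2 (B - A) (C - A)| / (3 * (‖B - A‖ + ‖C - A‖ + ‖B - C‖))
      ≤ inradius (convexHull ℝ ({A, B, C} : Set E2)) := by
  set D := d2 (B - A) (C - A) with hD'
  have hDpos : 0 < |D| := abs_pos.mpr hD
  set S := ‖B - A‖ + ‖C - A‖ + ‖B - C‖ with hS'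
  have hS : 0 < S := by
    have h1 : 0 < ‖B - A‖ := norm_pos_iff.mpr (vBA_ne hD)
    have h2 := norm_nonneg (C - A)
    have h3 := norm_nonneg (B - C)
    positivity
  set ρ := |D| / (3 * S) with hρ'
  have hρ0 : 0 ≤ ρ := by positivity
  set g := (3:ℝ)⁻¹ • (A + B + C) with hg
  refine le_csSup (inS_bddAbove hD) ?_
  refine ⟨hρ0, g, ?_, ?_⟩
  · rw [span_top' hD]; exact AffineSubspace.mem_top ℝ E2 g
  · intro y hy
    have hdist : ‖y - g‖ ≤ ρ := by
      rw [← dist_eq_norm]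
      exact mem_closedBall.mp hy.1
    have key : ∀ w : E2, ‖w‖ ≤ S → |d2 (y - g) w / D| ≤ 1 / 3 := by
      intro w hwS
      rw [abs_div]
      have h1 : |d2 (y - g) w| ≤ ρ * S := by
        calc |d2 (y - g) w| ≤ ‖y - g‖ * ‖w‖ := abs_d2_le _ _
        _ ≤ ρ * S := by
          apply mul_le_mul hdist hwS (norm_nonneg w) hρ0
      have h2 : ρ * S = |D| / 3 := by
        rw [hρ']; field_simp
      rw [h2] at h1
      rw [div_le_div_iff₀ hDpos (by norm_num : (0:ℝ) < 3)] at *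
      linarith
    have hB : 0 ≤ cB' A B C y := by
      have hd := cB_diff (A := A) (B := B) (C := C) y g
      have hk := key (C - A) (by
        have h1 := norm_nonneg (B - A); have h3 := norm_nonneg (B - C); rw [hS']; linarith)
      rw [← hd] at hk
      have := abs_le.mp hk
      have hc := centroid_cB hD
      rw [← hg] at hc
      rw [hc] at this
      linarith [this.1]
    have hC : 0 ≤ cC' A B C y := by
      have hd := cC_diff (A := A) (B := B) (C := C) y g
      have hk := key (A - B) (by
        rw [norm_sub_rev]
        have h2 := norm_nonneg (C - A); have h3 := norm_nonneg (B - C); rw [hS']; linarith)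
      rw [← hd] at hk
      have := abs_le.mp hk
      have hc := centroid_cC hD
      rw [← hg] at hc
      rw [hc] at this
      linarith [this.1]
    have hA : 0 ≤ cA' A B C y := by
      have hd := cA_diff (A := A) (B := B) (C := C) y g
      have hk := key (B - C) (by
        have h1 := norm_nonneg (B - A); have h2 := norm_nonneg (C - A); rw [hS']; linarith)
      rw [← hd] at hk
      have := abs_le.mp hk
      have hc := centroid_cA hD
      rw [← hg] at hc
      rw [hc] at this
      linarith [this.1]
    exact mem_of_nonneg hD hA hB hC

/-! ### angles -/

lemma angle_A_sin :
    Real.sin (∠ B A C) * (‖B - A‖ * ‖C - A‖) = |d2 (B - A) (C - A)| := by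
  have hv := vBA_ne hD
  have hw := vCA_ne hD
  have he : ∠ B A C = InnerProductGeometry.angle (B - A) (C - A) := rfl
  rw [he, sin_angle_eq hv hw, div_mul_cancel₀]
  exact (mul_pos (norm_pos_iff.mpr hv) (norm_pos_iff.mpr hw)).ne'

lemma angle_B_sin :
    Real.sin (∠ A B C) * (‖B - A‖ * ‖B - C‖) = |d2 (B - A) (C - A)| := by
  have hv : A - B ≠ 0 := by rw [← neg_sub B A]; exact neg_ne_zero.mpr (vBA_ne hD)
  have hw : C - B ≠ 0 := by rw [← neg_sub B C]; exact neg_ne_zero.mpr (vBC_ne hD)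
  have he : ∠ A B C = InnerProductGeometry.angle (A - B) (C - B) := rfl
  have key : d2 (A - B) (C - B) = -(d2 (B - A) (C - A)) := by
    show (A 0 - B 0) * (C 1 - B 1) - (A 1 - B 1) * (C 0 - B 0)
        = -((B 0 - A 0) * (C 1 - A 1) - (B 1 - A 1) * (C 0 - A 0))
    ring
  rw [he, sin_angle_eq hv hw, key, abs_neg, norm_sub_rev A B, norm_sub_rev C B,
    div_mul_cancel₀]
  have h1 : 0 < ‖B - A‖ := norm_pos_iff.mpr (vBA_ne hD)
  have h2 : 0 < ‖B - C‖ := norm_pos_iff.mpr (vBC_ne hD)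
  exact (mul_pos h1 h2).ne' 

lemma angle_C_sin :
    Real.sin (∠ A C B) * (‖B - C‖ * ‖C - A‖) = |d2 (B - A) (C - A)| := by
  have hv : A - C ≠ 0 := by rw [← neg_sub C A]; exact neg_ne_zero.mpr (vCA_ne hD)
  have hw := vBC_ne hD
  have he : ∠ A C B = InnerProductGeometry.angle (A - C) (B - C) := rfl
  have key : d2 (A - C) (B - C) = d2 (B - A) (C - A) := by
    show (A 0 - C 0) * (B 1 - C 1) - (A 1 - C 1) * (B 0 - C 0)
        = (B 0 - A 0) * (C 1 - A 1) - (B 1 - A 1) * (C 0 - A 0)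
    ring
  rw [he, sin_angle_eq hv hw, key, norm_sub_rev A C, mul_comm ‖C - A‖ ‖B - C‖,
    div_mul_cancel₀]
  have h1 : 0 < ‖C - A‖ := norm_pos_iff.mpr (vCA_ne hD)
  have h2 : 0 < ‖B - C‖ := norm_pos_iff.mpr (vBC_ne hD)
  exact (mul_pos h2 h1).ne' 

/-! ### arithmetic helpers -/

omit hD in
lemma angle_lower {f r R θ sd : ℝ} (hR : 0 < R) (hfr : f * R ≤ r)
    (h2r : 2 * r ≤ Real.sin θ * sd) (hsd : sd ≤ 2 * R) (hθ0 : 0 ≤ θ)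
    (hsin0 : 0 ≤ Real.sin θ) : f ≤ θ := by
  have hsle := Real.sin_le hθ0
  nlinarith [mul_le_mul_of_nonneg_left hsd hsin0,
    mul_le_mul_of_nonneg_left hsle hR.le]

omit hD in
lemma cancel_side {r sθ sd c : ℝ} (hc : 0 < c) (h : 2 * r * c ≤ sθ * (sd * c)) :
    2 * r ≤ sθ * sd := by
  rw [← mul_assoc] at h
  exact le_of_mul_le_mul_right h hc

omit hD in
lemma sin_ge_of_between {ψ θ : ℝ} (hψ0 : 0 < ψ) (hψ : ψ ≤ π / 2) (h1 : ψ ≤ θ)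
    (h2 : θ ≤ π - ψ) : Real.sin ψ ≤ Real.sin θ := by
  rcases le_or_gt θ (π / 2) with h | h
  · exact Real.sin_le_sin_of_le_of_le_pi_div_two (by linarith) h h1
  · rw [← Real.sin_pi_sub θ]
    exact Real.sin_le_sin_of_le_of_le_pi_div_two (by linarith) (by linarith) (by linarith)

end FatAux

set_option maxHeartbeats 1000000 in
open FatAux in
theorem fatness_iff_angle_bound :
    (∀ f : ℝ, 0 < f → ∃ φ > 0, ∀ A B C : E2, AffineIndependent ℝ ![A, B, C] →
      FatTri f A B C → φ ≤ ∠ B A C ∧ φ ≤ ∠ A B C ∧ φ ≤ ∠ A C B) ∧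
    (∀ φ : ℝ, 0 < φ → ∃ f > 0, ∀ A B C : E2, AffineIndependent ℝ ![A, B, C] →
      (φ ≤ ∠ B A C ∧ φ ≤ ∠ A B C ∧ φ ≤ ∠ A C B) → FatTri f A B C) := by
  constructor
  · -- fat implies angles bounded below
    intro f hf
    refine ⟨f, hf, ?_⟩
    intro A B C hind hfat
    have hD := d2_ne_of_ind hind
    have hR := circ_pos hD
    have hr0 := inradius_nonneg hD
    unfold FatTri at hfat
    have hfr : f * circumradius (convexHull ℝ {A, B, C})
        ≤ inradius (convexHull ℝ {A, B, C}) := (le_div_iff₀ hR).mp hfat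
    have hAm : A ∈ convexHull ℝ ({A, B, C} : Set E2) := subset_convexHull ℝ _ (by simp)
    have hBm : B ∈ convexHull ℝ ({A, B, C} : Set E2) := subset_convexHull ℝ _ (by simp)
    have hCm : C ∈ convexHull ℝ ({A, B, C} : Set E2) := subset_convexHull ℝ _ (by simp)
    have hBA2R : ‖B - A‖ ≤ 2 * circumradius (convexHull ℝ {A, B, C}) := by
      rw [← dist_eq_norm]; exact dist_le_two_circ hBm hAm
    have hBC2R : ‖B - C‖ ≤ 2 * circumradius (convexHull ℝ {A, B, C}) := by
      rw [← dist_eq_norm]; exact dist_le_two_circ hBm hCm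
    have h1 : 2 * inradius (convexHull ℝ {A, B, C}) * ‖C - A‖ ≤ |d2 (B - A) (C - A)| :=
      inradius_le hD (vCA_ne hD) cB01 (fun y z => cB_diff y z)
    have h2 : 2 * inradius (convexHull ℝ {A, B, C}) * ‖B - C‖ ≤ |d2 (B - A) (C - A)| :=
      inradius_le hD (vBC_ne hD) cA01 (fun y z => cA_diff y z)
    refine ⟨?_, ?_, ?_⟩
    · refine angle_lower hR hfr ?_ hBA2R (angle_nonneg _ _ _)
        (Real.sin_nonneg_of_nonneg_of_le_pi (angle_nonneg _ _ _) (angle_le_pi _ _ _))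
      refine cancel_side (norm_pos_iff.mpr (vCA_ne hD)) ?_
      rw [← angle_A_sin hD] at h1
      exact h1
    · refine angle_lower hR hfr ?_ hBA2R (angle_nonneg _ _ _)
        (Real.sin_nonneg_of_nonneg_of_le_pi (angle_nonneg _ _ _) (angle_le_pi _ _ _))
      refine cancel_side (norm_pos_iff.mpr (vBC_ne hD)) ?_
      rw [← angle_B_sin hD] at h2
      exact h2
    · refine angle_lower hR hfr ?_ hBC2R (angle_nonneg _ _ _)
        (Real.sin_nonneg_of_nonneg_of_le_pi (angle_nonneg _ _ _) (angle_le_pi _ _ _))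
      refine cancel_side (norm_pos_iff.mpr (vCA_ne hD)) ?_
      rw [← angle_C_sin hD] at h1
      exact h1
  · -- angles bounded below implies fat
    intro φ hφ
    have hπ := Real.pi_pos
    set ψ := min φ (π / 3) with hψdef
    have hψ0 : 0 < ψ := lt_min hφ (by positivity)
    have hψ3 : ψ ≤ π / 3 := min_le_right _ _
    have hψφ : ψ ≤ φ := min_le_left _ _
    have hsψ : 0 < Real.sin ψ := Real.sin_pos_of_pos_of_lt_pi hψ0 (by linarith)
    have hs1 : Real.sin ψ ≤ 1 := Real.sin_le_one ψ
    refine ⟨Real.sin ψ ^ 3 / 27, by positivity, ?_⟩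
    rintro A B C hind ⟨hA, hB, hC⟩
    have hD := d2_ne_of_ind hind
    have ha : 0 < ‖B - C‖ := norm_pos_iff.mpr (vBC_ne hD)
    have hb : 0 < ‖C - A‖ := norm_pos_iff.mpr (vCA_ne hD)
    have hc : 0 < ‖B - A‖ := norm_pos_iff.mpr (vBA_ne hD)
    set a := ‖B - C‖
    set b := ‖C - A‖
    set c := ‖B - A‖
    set sψ := Real.sin ψ
    -- angle sum
    have hAC : A ≠ C := (sub_ne_zero.mp (vCA_ne hD)).symm.symm |>.symm
    have hBC : B ≠ C := sub_ne_zero.mp (vBC_ne hD)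
    have hsum := EuclideanGeometry.angle_add_angle_add_angle_eq_pi
      (p₁ := C) B (hAC)
    rw [EuclideanGeometry.angle_comm C A B, EuclideanGeometry.angle_comm B C A] at hsum
    -- hsum : ∠ B A C + ∠ A B C + ∠ A C B = π
    have hψA : ψ ≤ ∠ B A C := le_trans hψφ hA
    have hψB : ψ ≤ ∠ A B C := le_trans hψφ hB
    have hψC : ψ ≤ ∠ A C B := le_trans hψφ hC
    have hupA : ∠ B A C ≤ π - ψ := by linarith
    have hupB : ∠ A B C ≤ π - ψ := by linarith
    have hupC : ∠ A C B ≤ π - ψ := by linarith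
    have hψ2 : ψ ≤ π / 2 := by linarith
    set sA := Real.sin (∠ B A C)
    set sB := Real.sin (∠ A B C)
    set sC := Real.sin (∠ A C B)
    have hsA : sψ ≤ sA := sin_ge_of_between hψ0 hψ2 hψA hupA
    have hsB : sψ ≤ sB := sin_ge_of_between hψ0 hψ2 hψB hupB
    have hsC : sψ ≤ sC := sin_ge_of_between hψ0 hψ2 hψC hupC
    have hsA1 : sA ≤ 1 := Real.sin_le_one _
    have hsB1 : sB ≤ 1 := Real.sin_le_one _
    have hsC1 : sC ≤ 1 := Real.sin_le_one _
    set DD := |d2 (B - A) (C - A)| with hDD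
    have hDDpos : 0 < DD := abs_pos.mpr hD
    have e1 : sA * (c * b) = DD := angle_A_sin hD
    have e2 : sB * (c * a) = DD := angle_B_sin hD
    have e3 : sC * (a * b) = DD := angle_C_sin hD
    have hba : b * sA = a * sB := mul_left_cancel₀ hc.ne' (by linear_combination e1 - e2)
    have hca : c * sA = a * sC := mul_left_cancel₀ hb.ne' (by linear_combination e1 - e3)
    have hcb : c * sB = b * sC := mul_left_cancel₀ ha.ne' (by linear_combination e2 - e3)
    -- side comparisons
    have hb_a : a * sψ ≤ b := by
      linarith [mul_le_mul_of_nonneg_left hsB ha.le, hba, mul_le_mul_of_nonneg_left hsA1 hb.le]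
    have ha_b : b * sψ ≤ a := by
      linarith [mul_le_mul_of_nonneg_left hsA hb.le, hba, mul_le_mul_of_nonneg_left hsB1 ha.le]
    have hc_a : a * sψ ≤ c := by
      linarith [mul_le_mul_of_nonneg_left hsC ha.le, hca, mul_le_mul_of_nonneg_left hsA1 hc.le]
    have ha_c : c * sψ ≤ a := by
      linarith [mul_le_mul_of_nonneg_left hsA hc.le, hca, mul_le_mul_of_nonneg_left hsC1 ha.le]
    have hb_c : c * sψ ≤ b := by
      linarith [mul_le_mul_of_nonneg_left hsB hc.le, hcb, mul_le_mul_of_nonneg_left hsC1 hb.le]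
    -- lower bounds for DD
    have hDa : sψ ^ 3 * a ^ 2 ≤ DD := by
      have t1 : sψ * ((a * sψ) * (a * sψ)) ≤ sψ * (c * b) := by
        apply mul_le_mul_of_nonneg_left ?_ hsψ.le
        exact mul_le_mul hc_a hb_a (by positivity) hc.le
      have t2 : sψ * (c * b) ≤ sA * (c * b) :=
        mul_le_mul_of_nonneg_right hsA (by positivity)
      nlinarith [t1, t2, e1]
    have hDb : sψ ^ 3 * b ^ 2 ≤ DD := by
      have t1 : sψ * ((b * sψ) * (b * sψ)) ≤ sψ * (a * b) := by
        apply mul_le_mul_of_nonneg_left ?_ hsψ.le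
        have hbb : b * sψ ≤ b := by
          have := mul_le_mul_of_nonneg_left hs1 hb.le
          rwa [mul_one] at this
        exact mul_le_mul ha_b hbb (by positivity) ha.le
      have t2 : sψ * (a * b) ≤ sC * (a * b) :=
        mul_le_mul_of_nonneg_right hsC (by positivity)
      nlinarith [t1, t2, e3]
    have hDc : sψ ^ 3 * c ^ 2 ≤ DD := by
      have t1 : sψ * (c * (c * sψ)) ≤ sψ * (c * a) := by
        apply mul_le_mul_of_nonneg_left ?_ hsψ.le
        exact mul_le_mul_of_nonneg_left ha_c hc.le
      have t2 : sψ * (c * a) ≤ sB * (c * a) :=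
        mul_le_mul_of_nonneg_right hsB (by positivity)
      nlinarith [t1, t2, e2, sq_nonneg c, mul_pos hc hc]
    -- combine
    have hkey : (c + b + a) ^ 2 ≤ 3 * (a ^ 2 + b ^ 2 + c ^ 2) := by
      nlinarith [sq_nonneg (a - b), sq_nonneg (b - c), sq_nonneg (a - c)]
    have hsum2 : sψ ^ 3 * (c + b + a) ^ 2 ≤ 9 * DD := by
      have hmul := mul_le_mul_of_nonneg_left hkey (by positivity : (0:ℝ) ≤ sψ ^ 3)
      nlinarith [hmul, hDa, hDb, hDc]
    have hR := circ_pos hD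
    have hrge : DD / (3 * (c + b + a)) ≤ inradius (convexHull ℝ {A, B, C}) :=
      inradius_ge hD
    have hRle : circumradius (convexHull ℝ ({A, B, C} : Set E2)) ≤ c + b := by
      have h := circ_le (A := A) (B := B) (C := C)
      rw [dist_eq_norm, dist_eq_norm] at h
      exact h
    unfold FatTri
    rw [le_div_iff₀ hR]
    have step1 : sψ ^ 3 / 27 * circumradius (convexHull ℝ ({A, B, C} : Set E2))
        ≤ sψ ^ 3 / 27 * (c + b + a) := by
      apply mul_le_mul_of_nonneg_left (by linarith) (by positivity)
    have step2 : sψ ^ 3 / 27 * (c + b + a) ≤ DD / (3 * (c + b + a)) := by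
      rw [le_div_iff₀ (by positivity)]
      nlinarith [hsum2]
    linarith
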